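/- arXiv:2007.08401 — 3 statements merged into one kernel-verified Lean document; each statement's English description precedes it below -/
import Mathlib

section
/- In the greedy spanner algorithm that considers edges in nondecreasing weight order and adds an edge (u,v) to H only if the current distance d_H(u,v) > (2k-1)·w(u,v), for any cycle C in the resulting graph H with at most 2k edges, the edge (u,v) ∈ C considered last by the algorithm satisfies d_{H_e}(u,v) ≤ (2k-1)·w(u,v), where H_e is the subgraph of edges of H considered strictly before (u,v). -/
open scoped ENNReal

/-- Weighted shortest-path distance (∞ if no path). -/
noncomputable def wdist {V : Type*} (G : SimpleGraph V) (w : Sym2 V → ℝ≥0∞) (u v : V) :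
    ℝ≥0∞ :=
  ⨅ p : G.Walk u v, (p.edges.map w).sum

-- sublemma: in a path starting at u containing edge s(u,v), the edge is the first edge
lemma path_first_edge {V : Type*} {H : SimpleGraph V} {u v x : V}
    (q : H.Walk u x) (hq : q.IsPath) (hmem : s(u, v) ∈ q.edges) :
    ∃ r : H.Walk v x, r.length + 1 = q.length ∧ r.edges ⊆ q.edges ∧ s(u, v) ∉ r.edges := by
  cases q with
  | nil => simp at hmem
  | @cons _ y _ h' q'' =>
    rw [SimpleGraph.Walk.edges_cons, List.mem_cons] at hmem
    rcases hmem with heq | hmem'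
    · have hvy : v = y := by
        rw [Sym2.congr_right] at heq; exact heq
      subst hvy
      refine ⟨q'', by simp, by simp [List.subset_cons_self], ?_⟩
      have := hq.2  -- support nodup tail? use trail edges nodup
      have htrail := hq.isTrail.edges_nodup
      rw [SimpleGraph.Walk.edges_cons] at htrail
      exact (List.nodup_cons.mp htrail).1
    · exfalso
      have hu : u ∈ q''.support := SimpleGraph.Walk.fst_mem_support_of_mem_edges q'' hmem'
      have := hq.support_nodup
      rw [SimpleGraph.Walk.support_cons] at this
      exact (List.nodup_cons.mp this).1 hu

lemma cycle_detour {V : Type*} {H : SimpleGraph V} {u v : V}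
    (c : H.Walk u u) (hc : c.IsCycle) (hmem : s(u, v) ∈ c.edges) :
    ∃ q : H.Walk u v, q.length + 1 = c.length ∧ q.edges ⊆ c.edges ∧ s(u, v) ∉ q.edges := by
  cases c with
  | nil => simp at hmem
  | @cons _ x _ h p =>
    rw [SimpleGraph.Walk.cons_isCycle_iff] at hc
    obtain ⟨hp, hux⟩ := hc
    rw [SimpleGraph.Walk.edges_cons, List.mem_cons] at hmem
    rcases hmem with heq | hmem'
    · have hvx : v = x := by rw [Sym2.congr_right] at heq; exact heq
      subst hvx
      refine ⟨p.reverse, by simp, by simp [List.subset_cons_self, SimpleGraph.Walk.edges_reverse,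
        List.reverse_subset], ?_⟩
      rw [SimpleGraph.Walk.edges_reverse, List.mem_reverse]
      rwa [← heq] at hux
    · have hrev : s(u, v) ∈ p.reverse.edges := by
        rw [SimpleGraph.Walk.edges_reverse, List.mem_reverse]; exact hmem'
      obtain ⟨r, hrl, hrsub, hrne⟩ := path_first_edge p.reverse hp.reverse hrev
      refine ⟨SimpleGraph.Walk.cons h r.reverse, ?_, ?_, ?_⟩
      · simp only [SimpleGraph.Walk.length_cons, SimpleGraph.Walk.length_reverse]
        rw [SimpleGraph.Walk.length_reverse] at hrl
        omega
      · intro e he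
        rw [SimpleGraph.Walk.edges_cons, List.mem_cons] at he
        rcases he with rfl | he
        · simp
        · rw [SimpleGraph.Walk.edges_reverse, List.mem_reverse] at he
          have := hrsub he
          rw [SimpleGraph.Walk.edges_reverse, List.mem_reverse] at this
          simp [this]
      · rw [SimpleGraph.Walk.edges_cons, List.mem_cons]
        push_neg
        constructor
        · intro heq; rw [← heq] at hux; exact hux hmem'
        · rw [SimpleGraph.Walk.edges_reverse, List.mem_reverse]; exact hrne

/-- If `C` is a cycle of length at most `2k` in `H` containing the edge `(u,v)`, and every
other edge of `C` was considered strictly before `(u,v)` (hence lies in `H_e` and has weight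
at most `w(u,v)` by the nondecreasing processing order), then
`d_{H_e}(u,v) ≤ (2k-1) · w(u,v)`. -/
theorem stmt2 {V : Type*} [DecidableEq V] (H He : SimpleGraph V) (hsub : He ≤ H)
    (w : Sym2 V → ℝ≥0∞) (k : ℕ) (hk : 1 ≤ k) (u v : V)
    (c : H.Walk u u) (hc : c.IsCycle) (hlen : c.length ≤ 2 * k)
    (hmem : s(u, v) ∈ c.edges)
    (hother : ∀ e ∈ c.edges, e ≠ s(u, v) → e ∈ He.edgeSet ∧ w e ≤ w s(u, v)) :
    wdist He w u v ≤ ((2 * k - 1 : ℕ) : ℝ≥0∞) * w s(u, v) := by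
  obtain ⟨q, hql, hqsub, hqne⟩ := cycle_detour c hc hmem
  have hedge : ∀ e ∈ q.edges, e ∈ He.edgeSet :=
    fun e he => (hother e (hqsub he) (fun h => hqne (h ▸ he))).1
  set q' : He.Walk u v := q.transfer He hedge with hq'
  have hE : q'.edges = q.edges := SimpleGraph.Walk.edges_transfer q hedge
  calc wdist He w u v ≤ (q'.edges.map w).sum := iInf_le _ q'
    _ ≤ (q'.edges.map w).length • w s(u, v) := by
        apply List.sum_le_card_nsmul
        intro x hx
        rw [List.mem_map] at hx
        obtain ⟨e, he, rfl⟩ := hx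
        rw [hE] at he
        exact (hother e (hqsub he) (fun h => hqne (h ▸ he))).2
    _ = (q.length : ℝ≥0∞) * w s(u, v) := by
        rw [List.length_map, hE, SimpleGraph.Walk.length_edges, nsmul_eq_mul]
    _ ≤ ((2 * k - 1 : ℕ) : ℝ≥0∞) * w s(u, v) := by
        apply mul_le_mul_left
        rw [Nat.cast_le]
        omega
end

section
/- Let X be a binomial random variable with parameters n and p. Then E[X^{1+1/k}] ≤ E[X]^{1+1/k} + Var[X] for any integer k ≥ 1. In particular, |E[X^{1+1/k}] − E[X]^{1+1/k}| ≤ |E[X^2] − E[X]^2| = Var[X] = np(1−p). -/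
open Finset

private lemma binom_sum (n : ℕ) (p : ℝ) :
    ∑ i ∈ Finset.range (n+1), (n.choose i : ℝ) * p ^ i * (1-p) ^ (n-i) = 1 := by
  calc ∑ i ∈ Finset.range (n+1), (n.choose i : ℝ) * p ^ i * (1-p) ^ (n-i)
      = ∑ i ∈ Finset.range (n+1), p ^ i * (1-p) ^ (n-i) * (n.choose i : ℝ) :=
        Finset.sum_congr rfl (by intros; ring)
    _ = (p + (1-p)) ^ n := (add_pow p (1-p) n).symm
    _ = 1 := by norm_num

private lemma binom_mean (n : ℕ) (p : ℝ) :
    ∑ i ∈ Finset.range (n+1), (n.choose i : ℝ) * p ^ i * (1-p) ^ (n-i) * (i : ℝ) = n * p := by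
  cases n with
  | zero => simp
  | succ m =>
    rw [Finset.sum_range_succ']
    have key : ∀ i : ℕ, (((m+1).choose (i+1) : ℕ) : ℝ) * ((i : ℝ)+1)
        = ((m : ℝ)+1) * ((m.choose i : ℕ) : ℝ) := by
      intro i
      have h : (m+1) * m.choose i = (m+1).choose (i+1) * (i+1) := Nat.add_one_mul_choose_eq m i
      have h' : (((m+1) * m.choose i : ℕ) : ℝ) = (((m+1).choose (i+1) * (i+1) : ℕ) : ℝ) := by
        exact_mod_cast congrArg (Nat.cast : ℕ → ℝ) h
      push_cast at h'
      linarith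
    calc (∑ i ∈ Finset.range (m+1),
            ((m+1).choose (i+1) : ℝ) * p ^ (i+1) * (1-p) ^ (m+1-(i+1)) * ((i+1 : ℕ) : ℝ))
          + ((m+1).choose 0 : ℝ) * p ^ 0 * (1-p) ^ (m+1-0) * ((0:ℕ) : ℝ)
        = ∑ i ∈ Finset.range (m+1),
            ((m:ℝ)+1) * p * ((m.choose i : ℝ) * p ^ i * (1-p) ^ (m-i)) := by
          rw [Nat.cast_zero, mul_zero, add_zero]
          refine Finset.sum_congr rfl fun i hi => ?_
          rw [Nat.succ_sub_succ, pow_succ]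
          push_cast
          calc ((m+1).choose (i+1) : ℝ) * (p ^ i * p) * (1-p) ^ (m-i) * ((i:ℝ)+1)
              = (((m+1).choose (i+1) : ℝ) * ((i:ℝ)+1)) * (p ^ i * p * (1-p) ^ (m-i)) := by ring
            _ = (((m:ℝ)+1) * (m.choose i : ℝ)) * (p ^ i * p * (1-p) ^ (m-i)) := by rw [key i]
            _ = ((m:ℝ)+1) * p * ((m.choose i : ℝ) * p ^ i * (1-p) ^ (m-i)) := by ring
      _ = ((m:ℝ)+1) * p := by
          rw [← Finset.mul_sum, binom_sum m p, mul_one]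
      _ = ((m+1 : ℕ) : ℝ) * p := by push_cast; ring

private lemma binom_fact2 (n : ℕ) (p : ℝ) :
    ∑ i ∈ Finset.range (n+1), (n.choose i : ℝ) * p ^ i * (1-p) ^ (n-i) * ((i:ℝ) * ((i:ℝ) - 1))
      = n * ((n:ℝ) - 1) * p ^ 2 := by
  match n with
  | 0 => simp
  | 1 => simp [Finset.sum_range_succ]
  | (m+2) =>
    rw [Finset.sum_range_succ', Finset.sum_range_succ']
    have key : ∀ i : ℕ, (((m+2).choose (i+2) : ℕ) : ℝ) * (((i:ℝ)+2) * ((i:ℝ)+1))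
        = ((m:ℝ)+2) * ((m:ℝ)+1) * ((m.choose i : ℕ) : ℝ) := by
      intro i
      have h1 : (m+2) * (m+1).choose (i+1) = (m+2).choose (i+2) * (i+2) :=
        Nat.add_one_mul_choose_eq (m+1) (i+1)
      have h2 : (m+1) * m.choose i = (m+1).choose (i+1) * (i+1) := Nat.add_one_mul_choose_eq m i
      have h : (m+2) * ((m+1) * m.choose i) = (m+2).choose (i+2) * (i+2) * (i+1) := by
        rw [h2, ← Nat.mul_assoc, h1]
      have h' := congrArg (Nat.cast : ℕ → ℝ) h
      push_cast at h'
      linarith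
    have step : ∀ i ∈ Finset.range (m+1),
        ((m+2).choose (i+1+1) : ℝ) * p ^ (i+1+1) * (1-p) ^ (m+2-(i+1+1)) *
            ((((i:ℕ)+1+1 : ℕ) : ℝ) * ((((i:ℕ)+1+1 : ℕ) : ℝ) - 1))
          = ((m:ℝ)+2) * ((m:ℝ)+1) * p ^ 2 * ((m.choose i : ℝ) * p ^ i * (1-p) ^ (m-i)) := by
      intro i hi
      have hsub : m+2-(i+1+1) = m - i := by omega
      rw [hsub]
      have hi2 : i+1+1 = i+2 := by omega
      rw [hi2]
      push_cast
      calc ((m+2).choose (i+2) : ℝ) * p ^ (i+2) * (1-p) ^ (m-i) * (((i:ℝ)+2) * ((i:ℝ)+2-1))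
          = (((m+2).choose (i+2) : ℝ) * (((i:ℝ)+2) * ((i:ℝ)+1))) * (p ^ (i+2) * (1-p) ^ (m-i)) := by
            ring
        _ = (((m:ℝ)+2) * ((m:ℝ)+1) * (m.choose i : ℝ)) * (p ^ (i+2) * (1-p) ^ (m-i)) := by
            rw [key i]
        _ = ((m:ℝ)+2) * ((m:ℝ)+1) * p ^ 2 * ((m.choose i : ℝ) * p ^ i * (1-p) ^ (m-i)) := by
            rw [pow_add]; ring
    rw [Finset.sum_congr rfl step, ← Finset.mul_sum, binom_sum m p]
    push_cast
    ring

private lemma binom_sq (n : ℕ) (p : ℝ) :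
    ∑ i ∈ Finset.range (n+1), (n.choose i : ℝ) * p ^ i * (1-p) ^ (n-i) * (i:ℝ) ^ 2
      = n * ((n:ℝ) - 1) * p ^ 2 + n * p := by
  have h : ∑ i ∈ Finset.range (n+1), (n.choose i : ℝ) * p ^ i * (1-p) ^ (n-i) * (i:ℝ) ^ 2
      = (∑ i ∈ Finset.range (n+1),
            (n.choose i : ℝ) * p ^ i * (1-p) ^ (n-i) * ((i:ℝ) * ((i:ℝ) - 1)))
        + ∑ i ∈ Finset.range (n+1), (n.choose i : ℝ) * p ^ i * (1-p) ^ (n-i) * (i:ℝ) := by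
    rw [← Finset.sum_add_distrib]
    exact Finset.sum_congr rfl fun i _ => by ring
  rw [h, binom_fact2, binom_mean]

-- pointwise concavity bound: for 0 ≤ x, 0 < μ, 0 < l ≤ 1 :
-- x ^ (1+l) ≤ μ^l * x + (l * μ^l / μ) * (x^2 - μ*x)
private lemma point_big {x μ l : ℝ} (hx : 0 ≤ x) (hμ : 0 < μ) (hl0 : 0 < l) (hl1 : l ≤ 1) :
    x ^ (1+l) ≤ μ ^ l * x + (l * μ ^ l / μ) * (x^2 - μ*x) := by
  have hxl : x ^ l ≤ μ ^ l + l * μ ^ l / μ * (x - μ) := by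
    have hs : -1 ≤ x/μ - 1 := by
      have : 0 ≤ x/μ := div_nonneg hx hμ.le
      linarith
    have hb := rpow_one_add_le_one_add_mul_self hs hl0.le hl1
    rw [show (1:ℝ) + (x/μ - 1) = x/μ by ring] at hb
    have hsplit : x ^ l = (x/μ) ^ l * μ ^ l := by
      rw [← Real.mul_rpow (div_nonneg hx hμ.le) hμ.le, div_mul_cancel₀ _ hμ.ne']
    rw [hsplit]
    have := mul_le_mul_of_nonneg_right hb (Real.rpow_nonneg hμ.le l)
    calc (x/μ) ^ l * μ ^ l ≤ (1 + l * (x/μ - 1)) * μ ^ l := this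
      _ = μ ^ l + l * μ ^ l / μ * (x - μ) := by field_simp
  have hpow : x ^ (1+l) = x * x ^ l := Real.rpow_one_add' hx (by positivity)
  rw [hpow]
  calc x * x ^ l ≤ x * (μ ^ l + l * μ ^ l / μ * (x - μ)) := mul_le_mul_of_nonneg_left hxl hx
    _ = μ ^ l * x + (l * μ ^ l / μ) * (x^2 - μ*x) := by ring

/-- For `X ~ Binomial(n,p)` and integer `k ≥ 1`:
`E[X^{1+1/k}] ≤ E[X]^{1+1/k} + Var[X]`, and
`|E[X^{1+1/k}] − E[X]^{1+1/k}| ≤ |E[X²] − E[X]²| = Var[X] = np(1−p)`. -/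
theorem stmt5 (n k : ℕ) (hk : 1 ≤ k) (p : ℝ) (hp0 : 0 ≤ p) (hp1 : p ≤ 1) :
    (let E : (ℕ → ℝ) → ℝ := fun g =>
        ∑ i ∈ Finset.range (n + 1), (n.choose i : ℝ) * p ^ i * (1 - p) ^ (n - i) * g i
     E (fun i => (i : ℝ) ^ (1 + 1 / (k : ℝ)))
        ≤ (E (fun i => (i : ℝ))) ^ (1 + 1 / (k : ℝ)) + (n : ℝ) * p * (1 - p)
      ∧ |E (fun i => (i : ℝ) ^ (1 + 1 / (k : ℝ))) - (E (fun i => (i : ℝ))) ^ (1 + 1 / (k : ℝ))|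
          ≤ |E (fun i => (i : ℝ) ^ 2) - (E (fun i => (i : ℝ))) ^ 2|
      ∧ |E (fun i => (i : ℝ) ^ 2) - (E (fun i => (i : ℝ))) ^ 2| = (n : ℝ) * p * (1 - p)) := by
  show (∑ i ∈ Finset.range (n + 1),
          (n.choose i : ℝ) * p ^ i * (1 - p) ^ (n - i) * (i : ℝ) ^ (1 + 1 / (k : ℝ)))
        ≤ (∑ i ∈ Finset.range (n + 1),
            (n.choose i : ℝ) * p ^ i * (1 - p) ^ (n - i) * (i : ℝ)) ^ (1 + 1 / (k : ℝ))
          + (n : ℝ) * p * (1 - p)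
      ∧ |(∑ i ∈ Finset.range (n + 1),
            (n.choose i : ℝ) * p ^ i * (1 - p) ^ (n - i) * (i : ℝ) ^ (1 + 1 / (k : ℝ)))
          - (∑ i ∈ Finset.range (n + 1),
              (n.choose i : ℝ) * p ^ i * (1 - p) ^ (n - i) * (i : ℝ)) ^ (1 + 1 / (k : ℝ))|
        ≤ |(∑ i ∈ Finset.range (n + 1),
              (n.choose i : ℝ) * p ^ i * (1 - p) ^ (n - i) * (i : ℝ) ^ 2)
            - (∑ i ∈ Finset.range (n + 1),
                (n.choose i : ℝ) * p ^ i * (1 - p) ^ (n - i) * (i : ℝ)) ^ 2|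
      ∧ |(∑ i ∈ Finset.range (n + 1),
              (n.choose i : ℝ) * p ^ i * (1 - p) ^ (n - i) * (i : ℝ) ^ 2)
            - (∑ i ∈ Finset.range (n + 1),
                (n.choose i : ℝ) * p ^ i * (1 - p) ^ (n - i) * (i : ℝ)) ^ 2|
          = (n : ℝ) * p * (1 - p)
  have hq0 : (0:ℝ) ≤ 1 - p := by linarith
  have hW : ∀ i : ℕ, 0 ≤ (n.choose i : ℝ) * p ^ i * (1-p) ^ (n-i) := fun i =>
    mul_nonneg (mul_nonneg (Nat.cast_nonneg _) (pow_nonneg hp0 _)) (pow_nonneg hq0 _)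
  have hk1 : (1:ℝ) ≤ (k:ℝ) := by exact_mod_cast hk
  have hkpos : (0:ℝ) < (k:ℝ) := by linarith
  have hl0 : 0 < 1/(k:ℝ) := by positivity
  have hl1 : 1/(k:ℝ) ≤ 1 := by rw [div_le_one hkpos]; exact hk1
  have hα0 : (0:ℝ) < 1 + 1/(k:ℝ) := by linarith
  have hα1 : (1:ℝ) ≤ 1 + 1/(k:ℝ) := by linarith
  have hα2 : 1 + 1/(k:ℝ) ≤ 2 := by linarith
  have hS0 := binom_sum n p
  have hS1 := binom_mean n p
  have hS2 := binom_sq n p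
  have hVar0 : 0 ≤ (n:ℝ) * p * (1-p) := mul_nonneg (mul_nonneg (Nat.cast_nonneg _) hp0) hq0
  have hμ0 : 0 ≤ (n:ℝ) * p := mul_nonneg (Nat.cast_nonneg _) hp0
  -- part (c)
  have hc : (∑ i ∈ Finset.range (n+1), (n.choose i : ℝ) * p ^ i * (1-p) ^ (n-i) * (i:ℝ) ^ 2)
      - (∑ i ∈ Finset.range (n+1), (n.choose i : ℝ) * p ^ i * (1-p) ^ (n-i) * (i:ℝ)) ^ 2
      = (n:ℝ) * p * (1-p) := by rw [hS1, hS2]; ring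
  -- part (a)
  have ha : (∑ i ∈ Finset.range (n+1),
        (n.choose i : ℝ) * p ^ i * (1-p) ^ (n-i) * (i:ℝ) ^ (1 + 1/(k:ℝ)))
      ≤ (∑ i ∈ Finset.range (n+1),
          (n.choose i : ℝ) * p ^ i * (1-p) ^ (n-i) * (i:ℝ)) ^ (1 + 1/(k:ℝ))
        + (n:ℝ) * p * (1-p) := by
    rw [hS1]
    rcases le_or_gt ((n:ℝ)*p) 1 with hμ | hμ
    · -- small mean: use x^(1+l) ≤ x^2 pointwise, then (np)^2 ≤ (np)^(1+l)
      have hpt : ∀ i : ℕ, (i:ℝ) ^ (1 + 1/(k:ℝ)) ≤ (i:ℝ) ^ 2 := by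
        intro i
        rcases Nat.eq_zero_or_pos i with rfl | hi
        · rw [Nat.cast_zero, Real.zero_rpow hα0.ne']
          norm_num
        · have h1i : (1:ℝ) ≤ (i:ℝ) := by exact_mod_cast hi
          calc (i:ℝ) ^ (1 + 1/(k:ℝ)) ≤ (i:ℝ) ^ (2:ℝ) :=
                Real.rpow_le_rpow_of_exponent_le h1i hα2
            _ = (i:ℝ) ^ 2 := by
                rw [show (2:ℝ) = ((2:ℕ):ℝ) by norm_num, Real.rpow_natCast]
      have hsum : (∑ i ∈ Finset.range (n+1),
            (n.choose i : ℝ) * p ^ i * (1-p) ^ (n-i) * (i:ℝ) ^ (1 + 1/(k:ℝ)))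
          ≤ ∑ i ∈ Finset.range (n+1), (n.choose i : ℝ) * p ^ i * (1-p) ^ (n-i) * (i:ℝ) ^ 2 :=
        Finset.sum_le_sum fun i _ => mul_le_mul_of_nonneg_left (hpt i) (hW i)
      rw [hS2] at hsum
      have hμineq : ((n:ℝ)*p) ^ 2 ≤ ((n:ℝ)*p) ^ (1 + 1/(k:ℝ)) := by
        rcases eq_or_lt_of_le hμ0 with h0 | h0
        · rw [← h0, Real.zero_rpow hα0.ne']
          norm_num
        · calc ((n:ℝ)*p) ^ 2 = ((n:ℝ)*p) ^ (2:ℝ) := by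
                rw [show (2:ℝ) = ((2:ℕ):ℝ) by norm_num, Real.rpow_natCast]
            _ ≤ ((n:ℝ)*p) ^ (1 + 1/(k:ℝ)) :=
                Real.rpow_le_rpow_of_exponent_ge h0 hμ hα2
      have : (n:ℝ) * ((n:ℝ)-1) * p ^ 2 + (n:ℝ)*p = ((n:ℝ)*p)^2 + (n:ℝ)*p*(1-p) := by ring
      linarith
    · -- big mean
      have hμpos : (0:ℝ) < (n:ℝ)*p := by linarith
      have hpt : ∀ i ∈ Finset.range (n+1),
          (n.choose i : ℝ) * p ^ i * (1-p) ^ (n-i) * (i:ℝ) ^ (1 + 1/(k:ℝ))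
            ≤ (n.choose i : ℝ) * p ^ i * (1-p) ^ (n-i) *
              (((n:ℝ)*p) ^ (1/(k:ℝ)) * (i:ℝ)
                + ((1/(k:ℝ)) * ((n:ℝ)*p) ^ (1/(k:ℝ)) / ((n:ℝ)*p)) * ((i:ℝ)^2 - ((n:ℝ)*p) * (i:ℝ))) :=
        fun i _ => mul_le_mul_of_nonneg_left
          (point_big (Nat.cast_nonneg i) hμpos hl0 hl1) (hW i)
      have hsum := Finset.sum_le_sum hpt
      have hexp : (∑ i ∈ Finset.range (n+1),
            (n.choose i : ℝ) * p ^ i * (1-p) ^ (n-i) *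
              (((n:ℝ)*p) ^ (1/(k:ℝ)) * (i:ℝ)
                + ((1/(k:ℝ)) * ((n:ℝ)*p) ^ (1/(k:ℝ)) / ((n:ℝ)*p)) * ((i:ℝ)^2 - ((n:ℝ)*p) * (i:ℝ))))
          = ((n:ℝ)*p) ^ (1/(k:ℝ)) *
              (∑ i ∈ Finset.range (n+1), (n.choose i : ℝ) * p ^ i * (1-p) ^ (n-i) * (i:ℝ))
            + ((1/(k:ℝ)) * ((n:ℝ)*p) ^ (1/(k:ℝ)) / ((n:ℝ)*p)) *
              (∑ i ∈ Finset.range (n+1), (n.choose i : ℝ) * p ^ i * (1-p) ^ (n-i) * (i:ℝ)^2)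
            - ((1/(k:ℝ)) * ((n:ℝ)*p) ^ (1/(k:ℝ)) / ((n:ℝ)*p)) * ((n:ℝ)*p) *
              (∑ i ∈ Finset.range (n+1), (n.choose i : ℝ) * p ^ i * (1-p) ^ (n-i) * (i:ℝ)) := by
        rw [Finset.mul_sum, Finset.mul_sum, Finset.mul_sum, ← Finset.sum_add_distrib,
          ← Finset.sum_sub_distrib]
        exact Finset.sum_congr rfl fun i _ => by ring
      rw [hexp, hS1, hS2] at hsum
      -- now bound the RHS
      have hcoef0 : 0 ≤ (1/(k:ℝ)) * ((n:ℝ)*p) ^ (1/(k:ℝ)) / ((n:ℝ)*p) := by positivity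
      have hcoef1 : (1/(k:ℝ)) * ((n:ℝ)*p) ^ (1/(k:ℝ)) / ((n:ℝ)*p) ≤ 1 := by
        rw [div_le_one hμpos]
        have h1 : ((n:ℝ)*p) ^ (1/(k:ℝ)) ≤ ((n:ℝ)*p) ^ (1:ℝ) :=
          Real.rpow_le_rpow_of_exponent_le hμ.le hl1
        rw [Real.rpow_one] at h1
        have h2 : 0 ≤ ((n:ℝ)*p) ^ (1/(k:ℝ)) := Real.rpow_nonneg hμpos.le _
        nlinarith
      have hmul : ((n:ℝ)*p) ^ (1 + 1/(k:ℝ)) = ((n:ℝ)*p) * ((n:ℝ)*p) ^ (1/(k:ℝ)) :=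
        Real.rpow_one_add' hμpos.le hα0.ne'
      have hvar : (n:ℝ) * ((n:ℝ)-1) * p ^ 2 + (n:ℝ)*p - ((n:ℝ)*p) * ((n:ℝ)*p)
          = (n:ℝ)*p*(1-p) := by ring
      have hcv : ((1/(k:ℝ)) * ((n:ℝ)*p) ^ (1/(k:ℝ)) / ((n:ℝ)*p)) * ((n:ℝ)*p*(1-p))
          ≤ (n:ℝ)*p*(1-p) := by
        nlinarith
      calc (∑ i ∈ Finset.range (n+1),
            (n.choose i : ℝ) * p ^ i * (1-p) ^ (n-i) * (i:ℝ) ^ (1 + 1/(k:ℝ)))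
          ≤ ((n:ℝ)*p) ^ (1/(k:ℝ)) * ((n:ℝ)*p)
            + ((1/(k:ℝ)) * ((n:ℝ)*p) ^ (1/(k:ℝ)) / ((n:ℝ)*p)) *
              ((n:ℝ) * ((n:ℝ)-1) * p ^ 2 + (n:ℝ)*p)
            - ((1/(k:ℝ)) * ((n:ℝ)*p) ^ (1/(k:ℝ)) / ((n:ℝ)*p)) * ((n:ℝ)*p) * ((n:ℝ)*p) := hsum
        _ = ((n:ℝ)*p) ^ (1 + 1/(k:ℝ))
            + ((1/(k:ℝ)) * ((n:ℝ)*p) ^ (1/(k:ℝ)) / ((n:ℝ)*p)) * ((n:ℝ)*p*(1-p)) := by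
            rw [hmul]; ring
        _ ≤ ((n:ℝ)*p) ^ (1 + 1/(k:ℝ)) + (n:ℝ)*p*(1-p) := by linarith
  -- Jensen: lower bound
  have hjen := (convexOn_rpow hα1).map_sum_le
    (t := Finset.range (n+1)) (w := fun i => (n.choose i : ℝ) * p ^ i * (1-p) ^ (n-i))
    (p := fun i : ℕ => (i:ℝ)) (fun i _ => hW i) hS0
    (fun i _ => Set.mem_Ici.mpr (Nat.cast_nonneg i))
  simp only [smul_eq_mul] at hjen
  -- part (b)
  have hb : |(∑ i ∈ Finset.range (n+1),
        (n.choose i : ℝ) * p ^ i * (1-p) ^ (n-i) * (i:ℝ) ^ (1 + 1/(k:ℝ)))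
      - (∑ i ∈ Finset.range (n+1),
          (n.choose i : ℝ) * p ^ i * (1-p) ^ (n-i) * (i:ℝ)) ^ (1 + 1/(k:ℝ))|
      ≤ |(∑ i ∈ Finset.range (n+1),
            (n.choose i : ℝ) * p ^ i * (1-p) ^ (n-i) * (i:ℝ) ^ 2)
          - (∑ i ∈ Finset.range (n+1),
              (n.choose i : ℝ) * p ^ i * (1-p) ^ (n-i) * (i:ℝ)) ^ 2| := by
    have h1 : (0:ℝ) ≤ (∑ i ∈ Finset.range (n+1),
          (n.choose i : ℝ) * p ^ i * (1-p) ^ (n-i) * (i:ℝ) ^ (1 + 1/(k:ℝ)))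
        - (∑ i ∈ Finset.range (n+1),
            (n.choose i : ℝ) * p ^ i * (1-p) ^ (n-i) * (i:ℝ)) ^ (1 + 1/(k:ℝ)) := by
      linarith [hjen]
    rw [hc, abs_of_nonneg h1, abs_of_nonneg hVar0]
    linarith [ha]
  have hc' : |(∑ i ∈ Finset.range (n+1),
        (n.choose i : ℝ) * p ^ i * (1-p) ^ (n-i) * (i:ℝ) ^ 2)
      - (∑ i ∈ Finset.range (n+1),
          (n.choose i : ℝ) * p ^ i * (1-p) ^ (n-i) * (i:ℝ)) ^ 2| = (n:ℝ) * p * (1-p) := by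
    rw [hc]; exact abs_of_nonneg hVar0
  exact ⟨ha, hb, hc'⟩
end

section
/- (Moore bound, used as 'folklore') Every n-vertex graph with no cycle of length at most 2k has at most n^{1+1/k} + n edges, for integer k ≥ 1. -/
/-!
If `G` has more than `d n` edges, where `n = |V|`, a smallest vertex set `t` spanning more than `d |t|` edges is
nonempty and every vertex has more than `d` neighbours inside it. Fix `v ∈ t`. As `G` has no cycle
of length at most `2k`, a path of length `i < k` from `v` meets the neighbourhood of its endpoint
only in its penultimate vertex, so it extends to at least `d` paths of length `i + 1` inside `t`;
and a path of length `k` from `v` is determined by its endpoint. Hence `d ^ k ≤ n`, and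
`d = ⌊n ^ (1 / k)⌋ + 1` gives `|E(G)| ≤ n ^ (1 + 1 / k) + n`.
-/

open Finset

namespace SimpleGraph.Walk

variable {V : Type*} {G : SimpleGraph V}

theorem IsSubwalk.length_le {u v u' v' : V} {p : G.Walk u v} {q : G.Walk u' v'}
    (h : p.IsSubwalk q) : p.length ≤ q.length := by
  simpa using h.edges_isInfix.length_le

theorem IsPath.eq_of_length_add_length_lt_egirth {u v : V} {p q : G.Walk u v}
    (hp : p.IsPath) (hq : q.IsPath) (hlen : p.length + q.length < G.egirth) : p = q := by
  by_contra hpq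
  obtain ⟨_, _, p', q', hp', hq', hc⟩ := hp.exists_isCycle_of_ne hq hpq
  have hc_len : (p'.append q'.reverse).length ≤ p.length + q.length := by
    simpa using add_le_add hp'.length_le hq'.length_le
  exact (egirth_le_length hc).not_gt ((Nat.cast_le.2 hc_len).trans_lt hlen)

theorem IsPath.eq_penultimate_of_adj [DecidableEq V] {u v x : V} {p : G.Walk u v} (hp : p.IsPath)
    (hG : 2 * p.length < G.egirth) (hx : x ∈ p.support) (hxv : G.Adj x v) :
    x = p.penultimate := by
  have hq : ((p.takeUntil x hx).concat hxv).IsPath :=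
    (hp.takeUntil hx).concat (endpoint_notMem_support_takeUntil hp hx hxv.ne') hxv
  have hq_len : ((p.takeUntil x hx).concat hxv).length ≤ p.length := by
    simpa using length_takeUntil_lt_length hx hxv.ne
  have hqp := hq.eq_of_length_add_length_lt_egirth hp (lt_of_le_of_lt (by norm_cast; omega) hG)
  rw [← hqp, penultimate_concat]

end SimpleGraph.Walk

namespace SimpleGraph

variable {V : Type*} (G : SimpleGraph V) [DecidableEq V] [DecidableRel G.Adj]

theorem sum_card_adj_insert {s : Finset V} {v : V} (hv : v ∉ s) :
    ∑ u ∈ insert v s, #{w ∈ insert v s | G.Adj u w} =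
      ∑ u ∈ s, #{w ∈ s | G.Adj u w} + 2 * #{w ∈ s | G.Adj v w} := by
  have hcard (u : V) : #{w ∈ insert v s | G.Adj u w} =
      #{w ∈ s | G.Adj u w} + if G.Adj u v then 1 else 0 := by
    rw [filter_insert]
    split_ifs <;> simp_all
  simp only [hcard, sum_insert hv, sum_add_distrib, sum_boole, G.irrefl, if_false, add_zero,
    G.adj_comm _ v, Nat.cast_id]
  ring

theorem exists_nonempty_forall_lt_card_adj [Fintype V] {d : ℕ}
    (h : d * Fintype.card V < #G.edgeFinset) :
    ∃ t : Finset V, t.Nonempty ∧ ∀ v ∈ t, d < #{w ∈ t | G.Adj v w} := by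
  -- the sum counts each edge inside `s` twice
  set dense : Finset (Finset V) := univ.powerset.filter
    fun s => 2 * d * #s < ∑ u ∈ s, #{w ∈ s | G.Adj u w}
  have huniv : univ ∈ dense := by
    simp only [dense, mem_filter, mem_powerset, subset_refl, true_and, card_univ]
    simp only [← neighborFinset_eq_filter, card_neighborFinset_eq_degree,
      sum_degrees_eq_twice_card_edges]
    linarith
  obtain ⟨t, ht, hmin⟩ := dense.exists_min_image card ⟨univ, huniv⟩
  simp only [dense, mem_filter, mem_powerset, subset_univ, true_and] at ht hmin
  refine ⟨t, nonempty_iff_ne_empty.2 (by rintro rfl; simp at ht), fun v hv => ?_⟩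
  have hsmall : ¬ 2 * d * #(t.erase v) < ∑ u ∈ t.erase v, #{w ∈ t.erase v | G.Adj u w} :=
    fun h' => (card_erase_lt_of_mem hv).not_ge (hmin _ h')
  rw [← insert_erase hv, G.sum_card_adj_insert (notMem_erase v t),
    card_insert_of_notMem (notMem_erase v t)] at ht
  have : #{w ∈ t.erase v | G.Adj v w} ≤ #{w ∈ t | G.Adj v w} :=
    card_le_card (filter_subset_filter _ (erase_subset v t))
  linarith

variable [Fintype V]

def pathsWithin (t : Finset V) (v : V) (i : ℕ) : Finset (Σ w, G.Walk v w) :=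
  univ.sigma fun w => {p ∈ G.finsetWalkLength i v w | p.IsPath ∧ ∀ x ∈ p.support, x ∈ t}

variable {G}

theorem mem_pathsWithin {t : Finset V} {v : V} {i : ℕ} {p : Σ w, G.Walk v w} :
    p ∈ G.pathsWithin t v i ↔ p.2.length = i ∧ p.2.IsPath ∧ ∀ x ∈ p.2.support, x ∈ t := by
  simp [pathsWithin, mem_finsetWalkLength_iff]

theorem card_pathsWithin_le_card {t : Finset V} {v : V} {i : ℕ} (hG : 2 * i < G.egirth) :
    #(G.pathsWithin t v i) ≤ Fintype.card V := by
  refine card_le_card_of_injOn Sigma.fst (fun _ _ => mem_univ _) ?_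
  rintro ⟨w, p⟩ hp ⟨w', q⟩ hq (rfl : w = w')
  simp only [mem_coe, mem_pathsWithin] at hp hq
  rw [hp.2.1.eq_of_length_add_length_lt_egirth hq.2.1 (by rw [hp.1, hq.1, ← two_mul]; exact hG)]

theorem card_pathsWithin_mul_le {t : Finset V} {v : V} {i d : ℕ}
    (hdeg : ∀ u ∈ t, d < #{w ∈ t | G.Adj u w}) (hG : 2 * i < G.egirth) :
    #(G.pathsWithin t v i) * d ≤ #(G.pathsWithin t v (i + 1)) := by
  classical
  rw [← mul_one #(G.pathsWithin t v (i + 1))]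
  refine card_mul_le_card_mul (fun p q => ∃ h : G.Adj p.1 q.1, q.2 = p.2.concat h) ?_ ?_
  · rintro ⟨u, p⟩ hp
    rw [mem_pathsWithin] at hp
    obtain ⟨rfl, hp, hpt⟩ := hp
    calc d ≤ #({w ∈ t | G.Adj u w}.erase p.penultimate) := by
          have := hdeg u (hpt u p.end_mem_support)
          have := pred_card_le_card_erase (s := {w ∈ t | G.Adj u w}) (a := p.penultimate)
          omega
      _ ≤ _ := by
          refine card_le_card_of_surjOn Sigma.fst fun w hw => ?_
          simp only [coe_erase, coe_filter, Set.mem_sdiff, Set.mem_ofPred_eq,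
            Set.mem_singleton_iff] at hw
          obtain ⟨⟨hwt, huw⟩, hw⟩ := hw
          have hwp : w ∉ p.support := fun h => hw (hp.eq_penultimate_of_adj hG h huw.symm)
          refine ⟨⟨w, p.concat huw⟩, ?_, rfl⟩
          simp only [mem_coe, mem_bipartiteAbove, mem_pathsWithin]
          refine ⟨⟨by simp, hp.concat hwp huw, ?_⟩, huw, trivial⟩
          simpa [Walk.support_concat, or_imp, forall_and] using ⟨hpt, hwt⟩
  · refine fun q _ => card_le_one.2 ?_
    rintro ⟨u, p⟩ hp ⟨u', p'⟩ hp'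
    obtain ⟨-, h, hq⟩ := (mem_bipartiteBelow _).1 hp
    obtain ⟨-, h', hq'⟩ := (mem_bipartiteBelow _).1 hp'
    obtain ⟨huu', hpp'⟩ := Walk.concat_inj (hq.symm.trans hq')
    dsimp only at huu' hpp'
    subst huu'
    rw [← hpp', Walk.copy_rfl_rfl]

theorem pow_le_card_of_forall_lt_card_adj {t : Finset V} {k d : ℕ} (hG : 2 * k < G.egirth)
    (ht : t.Nonempty) (hdeg : ∀ u ∈ t, d < #{w ∈ t | G.Adj u w}) : d ^ k ≤ Fintype.card V := by
  obtain ⟨v, hv⟩ := ht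
  have hpow (i : ℕ) (hi : i ≤ k) : d ^ i ≤ #(G.pathsWithin t v i) := by
    induction i with
    | zero => simpa using ⟨⟨v, .nil⟩, mem_pathsWithin.2 ⟨rfl, .nil, by simpa⟩⟩
    | succ i ih =>
      calc d ^ (i + 1) = d ^ i * d := pow_succ d i
        _ ≤ #(G.pathsWithin t v i) * d := Nat.mul_le_mul_right d (ih (by omega))
        _ ≤ #(G.pathsWithin t v (i + 1)) :=
          card_pathsWithin_mul_le hdeg (hG.trans_le' (by norm_cast; omega))
  exact (hpow k le_rfl).trans (card_pathsWithin_le_card hG)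

theorem pow_le_card_of_mul_card_lt {k d : ℕ} (hG : 2 * k < G.egirth)
    (h : d * Fintype.card V < #G.edgeFinset) : d ^ k ≤ Fintype.card V := by
  obtain ⟨t, ht, hdeg⟩ := G.exists_nonempty_forall_lt_card_adj h
  exact pow_le_card_of_forall_lt_card_adj hG ht hdeg

end SimpleGraph

open SimpleGraph in
/-- Moore bound: every `n`-vertex graph with no cycle of length at most `2k` has at most
`n^{1+1/k} + n` edges. -/
theorem stmt13 (V : Type*) [Fintype V] [DecidableEq V] (G : SimpleGraph V)
    [DecidableRel G.Adj] (k : ℕ) (hk : 1 ≤ k)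
    (hgirth : ∀ (v : V) (c : G.Walk v v), c.IsCycle → 2 * k < c.length) :
    (G.edgeFinset.card : ℝ)
      ≤ (Fintype.card V : ℝ) ^ (1 + 1 / (k : ℝ)) + (Fintype.card V : ℝ) := by
  set n := Fintype.card V
  have hG : 2 * k < G.egirth := by
    rw [← ENat.add_one_le_iff (by exact_mod_cast ENat.natCast_ne_top (2 * k)), le_egirth]
    exact fun v c hc => by exact_mod_cast hgirth v c hc
  rw [one_div]
  set x := (n : ℝ) ^ (k : ℝ)⁻¹
  have hx : 0 ≤ x := by positivity
  by_contra! h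
  set d := ⌊x⌋₊ + 1
  have hd : d * n < #G.edgeFinset := by
    have : (d : ℝ) ≤ x + 1 := by simpa [d] using Nat.floor_le hx
    have hsplit : (n : ℝ) ^ (1 + (k : ℝ)⁻¹) = n * x := by
      rw [Real.rpow_add' (by positivity) (by positivity), Real.rpow_one]
    exact_mod_cast (by nlinarith : (d * n : ℝ) < #G.edgeFinset)
  have hdk : (d : ℝ) ^ (k : ℝ) ≤ n := by exact_mod_cast pow_le_card_of_mul_card_lt hG hd
  have : (d : ℝ) ≤ x := by
    rwa [Real.le_rpow_inv_iff_of_pos (by positivity) (by positivity) (Nat.cast_pos.2 hk)]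
  exact (Nat.lt_floor_add_one x).not_ge (by simpa [d] using this)
end
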